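/- Let n ≥ 2 and let U_p be the parity unitary on n qubits, acting on computational basis states by U_p|x₁, x₂, …, xₙ⟩ = |x₁, …, x_{n−1}, x₁ ⊕ x₂ ⊕ ⋯ ⊕ xₙ⟩. If U_p = L_d · L_{d−1} ⋯ L₁ where each layer L_k is a unitary on (ℂ²)^{⊗n} that factors as a tensor product of gates each acting on at most 2 qubits (i.e. for each k there is a partition of {1,…,n} into blocks of size at most 2 such that L_k is a product of unitaries each supported on a single block), then 2^d ≥ n, i.e. the circuit depth d is at least log₂ n. -/

import Mathlib

/-!
STATEMENT 19: Let `U_p` be the parity unitary on `n ≥ 2` qubits,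
`U_p |x₁,…,xₙ⟩ = |x₁,…,x_{n−1}, x₁ ⊕ ⋯ ⊕ xₙ⟩`.  If `U_p = L_d ⋯ L₁` where each layer
`L_k` factors as a tensor product of (unitary) gates each acting on at most `2`
qubits, then `2^d ≥ n`: the circuit depth is at least `log₂ n`.
-/

namespace ParityDepth

/-- The mod-2 sum of the bits of `x`. -/
def xorAll {n : ℕ} (x : Fin n → Bool) : Bool :=
  decide ((Finset.univ.filter fun i => x i = true).card % 2 = 1)

/-- The parity map on basis states: it keeps the first `n−1` bits and writes the
parity of all the bits in the last position. -/
def parityMap {n : ℕ} (x : Fin n → Bool) : Fin n → Bool :=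
  fun j => if (j : ℕ) = n - 1 then xorAll x else x j

/-- The parity unitary `U_p` as a matrix on `(ℂ²)^{⊗n}`, indexed by the computational
basis: `U_p |x⟩ = |parityMap x⟩`. -/
noncomputable def parityMat (n : ℕ) :
    Matrix (Fin n → Bool) (Fin n → Bool) ℂ :=
  fun y x => if y = parityMap x then 1 else 0

/-- A matrix on `(ℂ²)^{⊗n}` is supported on the set `S` of qubits if its entries
vanish unless row and column indices agree outside `S`, and otherwise depend only on
the restrictions to `S`. -/
def Supported {n : ℕ} (M : Matrix (Fin n → Bool) (Fin n → Bool) ℂ)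
    (S : Finset (Fin n)) : Prop :=
  ∃ m : ({ i // i ∈ S } → Bool) → ({ i // i ∈ S } → Bool) → ℂ,
    ∀ x y, M x y =
      if ∀ i ∉ S, x i = y i then m (fun i => x i) (fun i => y i) else 0

/-- A layer: a unitary that factors as a product of unitaries supported on the blocks
of a partition of the qubits into blocks of size at most `2` (such factors commute, so
the product may be taken in any fixed order). -/
def IsLayer {n : ℕ} (L : Matrix (Fin n → Bool) (Fin n → Bool) ℂ) : Prop :=
  ∃ (r : ℕ) (B : Fin r → Finset (Fin n))
    (g : Fin r → Matrix (Fin n → Bool) (Fin n → Bool) ℂ),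
    (∀ a b, a ≠ b → Disjoint (B a) (B b)) ∧
    (∀ i : Fin n, ∃ a, i ∈ B a) ∧
    (∀ a, (B a).card ≤ 2) ∧
    (∀ a, Supported (g a) (B a) ∧ (g a).conjTranspose * g a = 1 ∧ g a * (g a).conjTranspose = 1) ∧
    L = (List.ofFn g).prod

-- ================= auxiliary development =================

open Matrix

abbrev Mat (n : ℕ) := Matrix (Fin n → Bool) (Fin n → Bool) ℂ

variable {n : ℕ}

lemma supported_mono {M : Mat n} {S T : Finset (Fin n)} (hST : S ⊆ T)
    (h : Supported M S) : Supported M T := by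
  classical
  obtain ⟨m, hm⟩ := h
  refine ⟨fun u v => if ∀ i : {i // i ∈ T}, i.1 ∉ S → u i = v i then
      m (fun j => u ⟨j.1, hST j.2⟩) (fun j => v ⟨j.1, hST j.2⟩) else 0, fun x y => ?_⟩
  beta_reduce
  rw [hm]
  by_cases hT : ∀ i ∉ T, x i = y i
  · rw [if_pos hT]
    by_cases hS : ∀ i ∉ S, x i = y i
    · rw [if_pos hS, if_pos (show ∀ i : {i // i ∈ T}, i.1 ∉ S → x i.1 = y i.1 from
        fun i hi => hS i.1 hi)]
    · rw [if_neg hS, if_neg]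
      intro hc
      apply hS
      intro i hi
      by_cases hiT : i ∈ T
      · exact hc ⟨i, hiT⟩ hi
      · exact hT i hiT
  · rw [if_neg hT, if_neg]
    intro hS
    exact hT fun i hi => hS i (fun h' => hi (hST h'))

lemma supported_one {S : Finset (Fin n)} : Supported (1 : Mat n) S := by
  classical
  refine ⟨fun u v => if u = v then 1 else 0, fun x y => ?_⟩
  beta_reduce
  by_cases hxy : x = y
  · subst hxy
    simp [Matrix.one_apply]
  · rw [Matrix.one_apply_ne hxy]
    by_cases h : ∀ i ∉ S, x i = y i
    · rw [if_pos h, if_neg]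
      intro hc
      apply hxy
      funext i
      by_cases hi : i ∈ S
      · exact congrFun hc ⟨i, hi⟩
      · exact h i hi
    · rw [if_neg h]

lemma supported_conjTranspose {M : Mat n} {S : Finset (Fin n)}
    (h : Supported M S) : Supported Mᴴ S := by
  obtain ⟨m, hm⟩ := h
  refine ⟨fun u v => star (m v u), fun x y => ?_⟩
  beta_reduce
  rw [Matrix.conjTranspose_apply, hm]
  by_cases hxy : ∀ i ∉ S, x i = y i
  · rw [if_pos (fun i hi => (hxy i hi).symm), if_pos hxy]
  · rw [if_neg (fun hc => hxy fun i hi => (hc i hi).symm), if_neg hxy, star_zero]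

lemma supported_mul {A B : Mat n} {S : Finset (Fin n)}
    (hA : Supported A S) (hB : Supported B S) : Supported (A * B) S := by
  classical
  obtain ⟨a, ha⟩ := hA
  obtain ⟨b, hb⟩ := hB
  refine ⟨fun u v => ∑ w, a u w * b w v, fun x y => ?_⟩
  beta_reduce
  rw [Matrix.mul_apply]
  by_cases hxy : ∀ i ∉ S, x i = y i
  · rw [if_pos hxy]
    rw [← Equiv.sum_comp (Equiv.piEquivPiSubtypeProd (fun i => i ∈ S) (fun _ => Bool)).symm
        (fun z => A x z * B z y), Fintype.sum_prod_type]
    apply Finset.sum_congr rfl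
    intro w _
    rw [Finset.sum_eq_single (fun i : {i // ¬ i ∈ S} => x i.1)]
    rotate_left
    · intro o _ ho
      have hex : ∃ i : {i // ¬ i ∈ S}, o i ≠ x i.1 := by
        by_contra hc
        push_neg at hc
        exact ho (funext hc)
      obtain ⟨i, hi⟩ := hex
      have hz0 : A x ((Equiv.piEquivPiSubtypeProd (fun i => i ∈ S) (fun _ => Bool)).symm (w, o)) = 0 := by
        rw [ha, if_neg]
        intro hc
        apply hi
        have h2 := hc i.1 i.2
        rw [Equiv.piEquivPiSubtypeProd_symm_apply, dif_neg i.2] at h2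
        exact h2.symm
      rw [hz0, zero_mul]
    · intro h; exact absurd (Finset.mem_univ _) h
    set z := (Equiv.piEquivPiSubtypeProd (fun i => i ∈ S) (fun _ => Bool)).symm
        (w, fun i : {i // ¬ i ∈ S} => x i.1) with hz
    have hzoff : ∀ i ∉ S, z i = x i := by
      intro i hi
      rw [hz, Equiv.piEquivPiSubtypeProd_symm_apply, dif_neg hi]
    have hzS : (fun i : {i // i ∈ S} => z i.1) = w := by
      funext i
      rw [hz, Equiv.piEquivPiSubtypeProd_symm_apply, dif_pos i.2]
    have hAx : A x z = a (fun i : {i // i ∈ S} => x i.1) w := by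
      rw [ha, if_pos (fun i hi => (hzoff i hi).symm), hzS]
    have hBy : B z y = b w (fun i : {i // i ∈ S} => y i.1) := by
      rw [hb, if_pos (fun i hi => (hzoff i hi).trans (hxy i hi)), hzS]
    rw [hAx, hBy]
  · rw [if_neg hxy]
    apply Finset.sum_eq_zero
    intro z _
    by_cases c1 : ∀ i ∉ S, x i = z i
    · by_cases c2 : ∀ i ∉ S, z i = y i
      · exact absurd (fun i hi => (c1 i hi).trans (c2 i hi)) hxy
      · rw [hb, if_neg c2, mul_zero]
    · rw [ha, if_neg c1, zero_mul]

lemma mul_comm_of_disjoint {A B : Mat n} {S T : Finset (Fin n)}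
    (hA : Supported A S) (hB : Supported B T) (hST : Disjoint S T) :
    A * B = B * A := by
  classical
  obtain ⟨a, ha⟩ := hA
  obtain ⟨b, hb⟩ := hB
  have hSnT : ∀ i, i ∈ S → i ∉ T := fun i hi => Finset.disjoint_left.mp hST hi
  have hTnS : ∀ i, i ∈ T → i ∉ S := fun i hi => Finset.disjoint_right.mp hST hi
  ext x y
  rw [Matrix.mul_apply, Matrix.mul_apply]
  rw [Finset.sum_eq_single (fun i => if i ∈ S then y i else x i)]
  rotate_left
  · intro z _ hz
    by_cases c1 : ∀ i ∉ S, x i = z i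
    · by_cases c2 : ∀ i ∉ T, z i = y i
      · exfalso
        apply hz
        funext i
        beta_reduce
        by_cases hi : i ∈ S
        · rw [if_pos hi]
          exact c2 i (hSnT i hi)
        · rw [if_neg hi]
          exact (c1 i hi).symm
      · rw [hb, if_neg c2, mul_zero]
    · rw [ha, if_neg c1, zero_mul]
  · intro h; exact absurd (Finset.mem_univ _) h
  rw [Finset.sum_eq_single (fun i => if i ∈ T then y i else x i)]
  rotate_left
  · intro z _ hz
    by_cases c1 : ∀ i ∉ T, x i = z i
    · by_cases c2 : ∀ i ∉ S, z i = y i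
      · exfalso
        apply hz
        funext i
        beta_reduce
        by_cases hi : i ∈ T
        · rw [if_pos hi]
          exact c2 i (hTnS i hi)
        · rw [if_neg hi]
          exact (c1 i hi).symm
      · rw [ha, if_neg c2, mul_zero]
    · rw [hb, if_neg c1, zero_mul]
  · intro h; exact absurd (Finset.mem_univ _) h
  -- compare the two single terms
  rw [ha, hb, hb, ha]
  beta_reduce
  rw [if_pos (show ∀ i ∉ S, x i = if i ∈ S then y i else x i from
        fun i hi => by rw [if_neg hi])]
  rw [if_pos (show ∀ i ∉ T, x i = if i ∈ T then y i else x i from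
        fun i hi => by rw [if_neg hi])]
  have e1 : (fun i : {i // i ∈ S} => (if i.1 ∈ S then y i.1 else x i.1)) =
      (fun i : {i // i ∈ S} => y i.1) := by
    funext i; rw [if_pos i.2]
  have e2 : (fun i : {i // i ∈ T} => (if i.1 ∈ S then y i.1 else x i.1)) =
      (fun i : {i // i ∈ T} => x i.1) := by
    funext i; rw [if_neg (hTnS i.1 i.2)]
  have e3 : (fun i : {i // i ∈ T} => (if i.1 ∈ T then y i.1 else x i.1)) =
      (fun i : {i // i ∈ T} => y i.1) := by
    funext i; rw [if_pos i.2]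
  have e4 : (fun i : {i // i ∈ S} => (if i.1 ∈ T then y i.1 else x i.1)) =
      (fun i : {i // i ∈ S} => x i.1) := by
    funext i; rw [if_neg (hSnT i.1 i.2)]
  rw [e1, e2, e3, e4]
  by_cases C : ∀ i, i ∉ S → i ∉ T → x i = y i
  · have hc2 : ∀ i ∉ T, (if i ∈ S then y i else x i) = y i := by
      intro i hi
      by_cases his : i ∈ S
      · rw [if_pos his]
      · rw [if_neg his]; exact C i his hi
    have hc4 : ∀ i ∉ S, (if i ∈ T then y i else x i) = y i := by
      intro i hi
      by_cases hit : i ∈ T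
      · rw [if_pos hit]
      · rw [if_neg hit]; exact C i hi hit
    rw [if_pos hc2, if_pos hc4]
    ring
  · have hc2 : ¬ ∀ i ∉ T, (if i ∈ S then y i else x i) = y i := by
      intro hc
      apply C
      intro i hiS hiT
      have h2 := hc i hiT
      rwa [if_neg hiS] at h2
    have hc4 : ¬ ∀ i ∉ S, (if i ∈ T then y i else x i) = y i := by
      intro hc
      apply C
      intro i hiS hiT
      have h2 := hc i hiS
      rwa [if_neg hiT] at h2
    rw [if_neg hc2, if_neg hc4, mul_zero, mul_zero]

lemma supported_list_prod {S : Finset (Fin n)} (l : List (Mat n))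
    (h : ∀ M ∈ l, Supported M S) : Supported l.prod S := by
  induction l with
  | nil => simpa using (supported_one (S := S))
  | cons M t ih =>
      rw [List.prod_cons]
      exact supported_mul (h M (by simp)) (ih fun N hN => h N (by simp [hN]))

lemma star_prod_self (l : List (Mat n))
    (h : ∀ M ∈ l, Mᴴ * M = 1 ∧ M * Mᴴ = 1) : (l.prod)ᴴ * l.prod = 1 := by
  have hu : l.prod ∈ unitary (Mat n) := by
    apply Submonoid.list_prod_mem
    intro M hM
    rw [Unitary.mem_iff, Matrix.star_eq_conjTranspose]
    exact h M hM
  have h1 := (Unitary.mem_iff.mp hu).1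
  rwa [Matrix.star_eq_conjTranspose] at h1

lemma layer_conj {L A : Mat n} {S : Finset (Fin n)} (hL : IsLayer L) (hA : Supported A S) :
    ∃ T : Finset (Fin n), T.card ≤ 2 * S.card ∧ Supported (Lᴴ * A * L) T := by
  classical
  obtain ⟨r, B, g, hdisj, hcover, hcard, hg, hprod⟩ := hL
  set p : Fin r → Prop := fun a => ((B a) ∩ S).Nonempty with hp
  set T : Finset (Fin n) := (Finset.univ.filter p).biUnion B with hT
  have hST : S ⊆ T := by
    intro i hi
    obtain ⟨a, ha⟩ := hcover i
    exact Finset.mem_biUnion.mpr ⟨a, Finset.mem_filter.mpr ⟨Finset.mem_univ _,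
      ⟨i, Finset.mem_inter.mpr ⟨ha, hi⟩⟩⟩, ha⟩
  have hcardT : T.card ≤ 2 * S.card := by
    have h1 : T.card ≤ ∑ a ∈ Finset.univ.filter p, (B a).card := Finset.card_biUnion_le
    have h2 : ∑ a ∈ Finset.univ.filter p, (B a).card ≤ 2 * (Finset.univ.filter p).card := by
      rw [Finset.card_eq_sum_ones (Finset.univ.filter p), Finset.mul_sum]
      exact Finset.sum_le_sum fun a _ => by simpa using hcard a
    have h3 : (Finset.univ.filter p).card ≤ S.card := by
      rcases Finset.eq_empty_or_nonempty (Finset.univ.filter p) with he | hne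
      · simp [he]
      · obtain ⟨a0, ha0⟩ := hne
        have hp0 : p a0 := (Finset.mem_filter.mp ha0).2
        apply Finset.card_le_card_of_injOn (fun a => if h : p a then h.choose else hp0.choose)
        · intro a ha
          have hpa : p a := (Finset.mem_filter.mp ha).2
          simp only [dif_pos hpa]
          exact (Finset.mem_inter.mp hpa.choose_spec).2
        · intro a ha b hb hab
          simp only [Finset.coe_filter, Set.mem_setOf_eq] at ha hb
          have hpa : p a := ha.2
          have hpb : p b := hb.2
          beta_reduce at hab
          rw [dif_pos hpa, dif_pos hpb] at hab
          by_contra hne'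
          have h1' := (Finset.mem_inter.mp hpa.choose_spec).1
          have h2' := (Finset.mem_inter.mp hpb.choose_spec).1
          rw [hab] at h1'
          exact Finset.disjoint_left.mp (hdisj a b hne') h1' h2'
    omega
  set lf : List (Fin r) := (List.finRange r).filter (fun a => decide (p a)) with hlf
  set lg : List (Fin r) := (List.finRange r).filter (fun a => !decide (p a)) with hlg
  set P : Mat n := (lf.map g).prod with hP
  set Q : Mat n := (lg.map g).prod with hQ
  have hcomm : ∀ a b : Fin r, a ≠ b → Commute (g a) (g b) := fun a b hab =>
    mul_comm_of_disjoint (hg a).1 (hg b).1 (hdisj a b hab)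
  have hpwfull : ((lf ++ lg).map g).Pairwise Commute := by
    apply List.Pairwise.map g (fun a b hab => hcomm a b hab)
    rw [List.Perm.pairwise_iff (fun h => Ne.symm h) (List.filter_append_perm _ _)]
    exact (List.nodup_finRange r)
  have hL2 : L = P * Q := by
    rw [hprod, List.ofFn_eq_map]
    have hperm : ((lf ++ lg).map g).Perm ((List.finRange r).map g) :=
      (List.filter_append_perm _ _).map g
    rw [← List.Perm.prod_eq' hperm hpwfull, List.map_append, List.prod_append]
  have hPsupp : Supported P T := by
    apply supported_list_prod
    intro M hM
    rw [List.mem_map] at hM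
    obtain ⟨a, haf, rfl⟩ := hM
    have hpa : p a := by
      have h2 := (List.mem_filter.mp haf).2
      simpa using h2
    refine supported_mono ?_ (hg a).1
    intro i hi
    exact Finset.mem_biUnion.mpr ⟨a, Finset.mem_filter.mpr ⟨Finset.mem_univ _, hpa⟩, hi⟩
  set W : Finset (Fin n) := (Finset.univ.filter fun a => ¬ p a).biUnion B with hW
  have hQsupp : Supported Q W := by
    apply supported_list_prod
    intro M hM
    rw [List.mem_map] at hM
    obtain ⟨a, haf, rfl⟩ := hM
    have hpa : ¬ p a := by
      have h2 := (List.mem_filter.mp haf).2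
      simpa using h2
    refine supported_mono ?_ (hg a).1
    intro i hi
    exact Finset.mem_biUnion.mpr ⟨a, Finset.mem_filter.mpr ⟨Finset.mem_univ _, hpa⟩, hi⟩
  have hTW : Disjoint T W := by
    rw [Finset.disjoint_left]
    intro i hiT hiW
    obtain ⟨a, haf, hia⟩ := Finset.mem_biUnion.mp hiT
    obtain ⟨b, hbf, hib⟩ := Finset.mem_biUnion.mp hiW
    have hab : a ≠ b := by
      intro h
      exact (Finset.mem_filter.mp hbf).2 (h ▸ (Finset.mem_filter.mp haf).2)
    exact Finset.disjoint_left.mp (hdisj a b hab) hia hib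
  have hQu : Qᴴ * Q = 1 := by
    apply star_prod_self
    intro M hM
    rw [List.mem_map] at hM
    obtain ⟨a, _, rfl⟩ := hM
    exact ⟨(hg a).2.1, (hg a).2.2⟩
  refine ⟨T, hcardT, ?_⟩
  have hA' : Supported (Pᴴ * A * P) T :=
    supported_mul (supported_mul (supported_conjTranspose hPsupp) (supported_mono hST hA)) hPsupp
  have key : Lᴴ * A * L = Pᴴ * A * P := by
    rw [hL2, Matrix.conjTranspose_mul]
    have hcommQ : (Pᴴ * A * P) * Q = Q * (Pᴴ * A * P) :=
      mul_comm_of_disjoint hA' hQsupp hTW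
    calc Qᴴ * Pᴴ * A * (P * Q)
        = Qᴴ * ((Pᴴ * A * P) * Q) := by simp only [Matrix.mul_assoc]
      _ = Qᴴ * (Q * (Pᴴ * A * P)) := by rw [hcommQ]
      _ = (Qᴴ * Q) * (Pᴴ * A * P) := (Matrix.mul_assoc (Qᴴ) Q _).symm
      _ = Pᴴ * A * P := by rw [hQu, Matrix.one_mul]
  rw [key]
  exact hA'

lemma conj_list (l : List (Mat n)) (hl : ∀ M ∈ l, IsLayer M) {A : Mat n} {S : Finset (Fin n)}
    (hA : Supported A S) :
    ∃ T : Finset (Fin n), T.card ≤ 2 ^ l.length * S.card ∧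
      Supported ((l.prod)ᴴ * A * l.prod) T := by
  induction l generalizing A S with
  | nil =>
      refine ⟨S, by simp, ?_⟩
      simpa using hA
  | cons M t ih =>
      obtain ⟨T1, hT1, hS1⟩ := layer_conj (hl M (by simp)) hA
      obtain ⟨T, hTc, hTs⟩ := ih (fun N hN => hl N (by simp [hN])) hS1
      refine ⟨T, ?_, ?_⟩
      · calc T.card ≤ 2 ^ t.length * T1.card := hTc
          _ ≤ 2 ^ t.length * (2 * S.card) := Nat.mul_le_mul_left _ hT1
          _ = 2 ^ (M :: t).length * S.card := by rw [List.length_cons]; ring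
      · rw [List.prod_cons, Matrix.conjTranspose_mul]
        have h2 : (t.prod)ᴴ * Mᴴ * A * (M * t.prod) = (t.prod)ᴴ * (Mᴴ * A * M) * t.prod := by
          simp only [Matrix.mul_assoc]
        rw [h2]
        exact hTs

def diagMat {n : ℕ} (f : (Fin n → Bool) → ℂ) : Mat n := fun x y => if x = y then f x else 0

lemma supported_diag_single (j : Fin n) (c : Bool → ℂ) :
    Supported (diagMat fun x => c (x j)) ({j} : Finset (Fin n)) := by
  classical
  refine ⟨fun u v => if u = v then c (u ⟨j, Finset.mem_singleton_self j⟩) else 0, fun x y => ?_⟩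
  beta_reduce
  by_cases hxy : x = y
  · subst hxy
    rw [if_pos (fun i _ => rfl), if_pos rfl]
    simp [diagMat]
  · have hD : diagMat (fun x => c (x j)) x y = 0 := if_neg hxy
    rw [hD]
    by_cases h : ∀ i ∉ ({j} : Finset (Fin n)), x i = y i
    · rw [if_pos h, if_neg]
      intro hc
      apply hxy
      funext i
      by_cases hi : i = j
      · subst hi
        exact congrFun hc ⟨i, Finset.mem_singleton_self i⟩
      · exact h i (by simp [hi])
    · rw [if_neg h]

def permMat {n : ℕ} (π : (Fin n → Bool) → (Fin n → Bool)) : Mat n :=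
  Matrix.of fun y x => if y = π x then (1:ℂ) else 0

lemma permMat_apply {n : ℕ} (π : (Fin n → Bool) → (Fin n → Bool)) (y x : Fin n → Bool) :
    permMat π y x = if y = π x then (1:ℂ) else 0 := rfl

lemma conj_perm (π : (Fin n → Bool) → (Fin n → Bool)) (hπ : Function.Injective π)
    (f : (Fin n → Bool) → ℂ) :
    (permMat π)ᴴ * diagMat f * permMat π = diagMat (fun x => f (π x)) := by
  classical
  ext x y
  rw [Matrix.mul_apply]
  have hstep : ∀ b, ((permMat π)ᴴ * diagMat f) x b
      = (if b = π x then f b else 0) := by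
    intro b
    rw [Matrix.mul_apply]
    rw [Finset.sum_eq_single b]
    · rw [Matrix.conjTranspose_apply, permMat_apply]
      show (star (if b = π x then (1:ℂ) else 0)) * (if b = b then f b else 0) = _
      rw [if_pos rfl]
      by_cases hb : b = π x
      · rw [if_pos hb, if_pos hb, star_one, one_mul]
      · rw [if_neg hb, if_neg hb, star_zero, zero_mul]
    · intro a _ hab
      have h0 : diagMat f a b = 0 := if_neg hab
      rw [h0, mul_zero]
    · intro h; exact absurd (Finset.mem_univ _) h
  calc (∑ b, ((permMat π)ᴴ * diagMat f) x b * permMat π b y)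
      = ∑ b, (if b = π x then f b else 0) * (if b = π y then (1:ℂ) else 0) := by
        apply Finset.sum_congr rfl
        intro b _
        rw [hstep b, permMat_apply]
    _ = diagMat (fun x => f (π x)) x y := by
        rw [Finset.sum_eq_single (π x)]
        · rw [if_pos rfl]
          by_cases hxy : x = y
          · subst hxy
            rw [if_pos rfl, mul_one]
            simp [diagMat]
          · have hne : ¬ (π x = π y) := fun hc => hxy (hπ hc)
            rw [if_neg hne]
            have h0 : diagMat (fun x => f (π x)) x y = 0 := if_neg hxy
            rw [h0, mul_zero]
        · intro b _ hb
          rw [if_neg hb, zero_mul]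
        · intro h; exact absurd (Finset.mem_univ _) h

lemma filter_card_split (x : Fin n → Bool) (j : Fin n) :
    (Finset.univ.filter fun i => x i = true).card
      = ((Finset.univ.erase j).filter fun i => x i = true).card + (if x j then 1 else 0) := by
  classical
  have h : (Finset.univ : Finset (Fin n)) = insert j (Finset.univ.erase j) :=
    (Finset.insert_erase (Finset.mem_univ j)).symm
  conv_lhs => rw [h]
  rw [Finset.filter_insert]
  have hnm : j ∉ (Finset.univ.erase j).filter fun i => x i = true := by
    intro hc
    exact (Finset.mem_erase.mp (Finset.mem_filter.mp hc).1).1 rfl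
  by_cases hx : x j = true
  · rw [if_pos hx, Finset.card_insert_of_notMem hnm, if_pos hx]
  · rw [if_neg hx, if_neg hx, Nat.add_zero]

lemma parityMap_injective (hn : 0 < n) : Function.Injective (parityMap (n := n)) := by
  classical
  intro x y hxy
  set j : Fin n := ⟨n - 1, by omega⟩ with hj
  have hoff : ∀ i, i ≠ j → x i = y i := by
    intro i hi
    have h2 := congrFun hxy i
    have h3 : ¬ ((i : ℕ) = n - 1) := by
      intro hc
      exact hi (Fin.ext hc)
    simpa [parityMap, h3] using h2
  have hxor : xorAll x = xorAll y := by
    have h2 := congrFun hxy j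
    have h4 : ((j : ℕ)) = n - 1 := rfl
    simpa [parityMap, h4] using h2
  funext i
  by_cases hi : i = j
  · rw [hi]
    have hx := filter_card_split x j
    have hy := filter_card_split y j
    have hfe : ((Finset.univ.erase j).filter fun k => x k = true)
        = ((Finset.univ.erase j).filter fun k => y k = true) := by
      apply Finset.filter_congr
      intro k hk
      rw [hoff k (Finset.mem_erase.mp hk).1]
    have hmod : ((Finset.univ.filter fun k => x k = true).card % 2 = 1)
        ↔ ((Finset.univ.filter fun k => y k = true).card % 2 = 1) := by
      unfold xorAll at hxor
      exact decide_eq_decide.mp hxor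
    rw [hx, hy, hfe] at hmod
    by_cases hxi : x j = true <;> by_cases hyi : y j = true
    · rw [hxi, hyi]
    · rw [if_pos hxi, if_neg hyi] at hmod
      exfalso
      omega
    · rw [if_neg hxi, if_pos hyi] at hmod
      exfalso
      omega
    · rw [Bool.not_eq_true] at hxi hyi
      rw [hxi, hyi]
  · exact hoff i hi

/-- If the parity unitary on `n ≥ 2` qubits is written as a
product `L_d ⋯ L₁` of layers of `1`- and `2`-qubit gates, then `n ≤ 2^d`, i.e. the
depth `d` is at least `log₂ n`. -/
theorem parity_depth_lower_bound (n d : ℕ) (hn : 2 ≤ n)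
    (L : Fin d → Matrix (Fin n → Bool) (Fin n → Bool) ℂ)
    (hL : ∀ k, IsLayer (L k))
    (hU : ((List.ofFn L).reverse).prod = parityMat n) :
    n ≤ 2 ^ d := by
  classical
  have hn0 : 0 < n := by omega
  set j : Fin n := ⟨n - 1, by omega⟩ with hj
  have hZsupp : Supported (diagMat fun x => (fun b => if b then (-1:ℂ) else 1) (x j))
      ({j} : Finset (Fin n)) := supported_diag_single j (fun b => if b then (-1:ℂ) else 1)
  set l := (List.ofFn L).reverse with hlrev
  have hmem : ∀ M ∈ l, IsLayer M := by
    intro M hM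
    rw [hlrev, List.mem_reverse, List.mem_ofFn] at hM
    obtain ⟨k, rfl⟩ := hM
    exact hL k
  obtain ⟨T, hTc, hTs⟩ := conj_list l hmem hZsupp
  have hlen : l.length = d := by simp [hlrev]
  rw [hU] at hTs
  have hPM : parityMat n = permMat (parityMap (n := n)) := rfl
  have hconj := conj_perm (parityMap (n := n)) (parityMap_injective hn0)
      (fun v => (fun b => if b then (-1:ℂ) else 1) (v j))
  rw [hPM, hconj] at hTs
  have hval : ∀ x : Fin n → Bool, (parityMap x) j = xorAll x := by
    intro x
    have h4 : ((j : ℕ)) = n - 1 := rfl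
    simp [parityMap, h4]
  have hTs3 : Supported (diagMat fun x => if xorAll x then (-1:ℂ) else 1) T := by
    have he : (fun x => (fun v => (fun b => if b then (-1:ℂ) else 1) (v j)) (parityMap x))
        = (fun x => if xorAll x then (-1:ℂ) else 1) := by
      funext x
      beta_reduce
      rw [hval x]
    rwa [he] at hTs
  have hTuniv : ∀ i : Fin n, i ∈ T := by
    intro i
    by_contra hi
    obtain ⟨m, hm⟩ := hTs3
    have h1 := hm (fun _ => false) (fun _ => false)
    have h2 := hm (Function.update (fun _ => false) i true)
      (Function.update (fun _ => false) i true)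
    have e1 : xorAll (fun _ : Fin n => false) = false := by
      simp [xorAll]
    have e2 : xorAll (Function.update (fun _ : Fin n => false) i true) = true := by
      have hset : (Finset.univ.filter fun k =>
          Function.update (fun _ : Fin n => false) i true k = true) = {i} := by
        ext a
        simp [Function.update_apply]
      simp [xorAll, hset]
    have hd1 : diagMat (fun x => if xorAll x then (-1:ℂ) else 1)
        (fun _ : Fin n => false) (fun _ : Fin n => false) = 1 := by
      simp [diagMat, e1]
    have hd2 : diagMat (fun x => if xorAll x then (-1:ℂ) else 1)
        (Function.update (fun _ : Fin n => false) i true)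
        (Function.update (fun _ : Fin n => false) i true) = -1 := by
      simp [diagMat, e2]
    rw [hd1, if_pos (fun k _ => rfl)] at h1
    rw [hd2, if_pos (fun k _ => rfl)] at h2
    have hresteq : (fun k : {k // k ∈ T} =>
          Function.update (fun _ : Fin n => false) i true k.1)
        = (fun _ : {k // k ∈ T} => false) := by
      funext k
      have hki : (k : Fin n) ≠ i := fun hc => hi (hc ▸ k.2)
      simp [Function.update_apply, hki]
    rw [hresteq] at h2
    rw [← h1] at h2
    norm_num at h2
  have hcardT : n ≤ T.card := by
    have hsub : (Finset.univ : Finset (Fin n)) ⊆ T := fun i _ => hTuniv i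
    calc n = (Finset.univ : Finset (Fin n)).card := by simp
      _ ≤ T.card := Finset.card_le_card hsub
  calc n ≤ T.card := hcardT
    _ ≤ 2 ^ l.length * ({j} : Finset (Fin n)).card := hTc
    _ = 2 ^ d := by rw [hlen]; simp


end ParityDepth
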